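/- For any integers n > q > 0 and any prime p with p ≡ 1 (mod q), the p-adic valuation of the gcd of the binomial coefficients C(n, qk) taken over all k with 0 < qk < n equals 1 if the sum of the base-p digits of n is at most q, and equals 0 otherwise. -/

import Mathlib

private lemma sumdig_cons {p : ℕ} (hp : 1 < p) (a : ℕ) :
    (Nat.digits p a).sum = a % p + (Nat.digits p (a / p)).sum := by
  rcases Nat.eq_zero_or_pos a with rfl | ha
  · simp
  · rw [Nat.digits_def' hp ha]; simp

private lemma sumdig_split {p : ℕ} (hp : 1 < p) :
    ∀ (j r x : ℕ), r < p ^ j →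
      (Nat.digits p (r + p ^ j * x)).sum = (Nat.digits p r).sum + (Nat.digits p x).sum := by
  intro j
  induction j with
  | zero =>
    intro r x hr
    rw [pow_zero] at hr
    obtain rfl : r = 0 := by omega
    simp
  | succ j ih =>
    intro r x hr
    rcases Nat.eq_zero_or_pos x with rfl | hx
    · simp
    have hp0 : 0 < p := by omega
    have hpow : 0 < p ^ (j + 1) := pow_pos hp0 _
    have hpos : 0 < r + p ^ (j + 1) * x := by positivity
    have hrw : r + p ^ (j + 1) * x = (r + p * (p ^ j * x)) := by ring
    have h1 : (r + p ^ (j + 1) * x) % p = r % p := by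
      rw [hrw, Nat.add_mul_mod_self_left]
    have h2 : (r + p ^ (j + 1) * x) / p = r / p + p ^ j * x := by
      rw [hrw, Nat.add_mul_div_left _ _ hp0]
    have hrp : r / p < p ^ j := by
      rw [Nat.div_lt_iff_lt_mul hp0]
      calc r < p ^ (j + 1) := hr
        _ = p ^ j * p := by ring
    rw [Nat.digits_def' hp hpos, List.sum_cons, h1, h2, ih (r / p) x hrp,
      sumdig_cons hp r]
    ring

private lemma sumdig_single {p : ℕ} (hp : 1 < p) {a : ℕ} (ha : a < p) :
    (Nat.digits p a).sum = a := by
  rw [sumdig_cons hp a, Nat.mod_eq_of_lt ha, Nat.div_eq_of_lt ha]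
  simp

private lemma sumdig_pos {p : ℕ} (hp : 1 < p) : ∀ x : ℕ, 0 < x → 0 < (Nat.digits p x).sum := by
  intro x
  induction x using Nat.strong_induction_on with
  | _ x ih =>
    intro hx
    rw [sumdig_cons hp]
    rcases Nat.eq_zero_or_pos (x % p) with h | h
    · have hpx : p ≤ x := Nat.le_of_dvd hx (Nat.dvd_of_mod_eq_zero h)
      have hdiv : 0 < x / p := Nat.div_pos hpx (by omega)
      have := ih (x / p) (Nat.div_lt_self hx hp) hdiv
      omega
    · omega

/-- digit-sum decrease under subtraction of `c` at the bottom digit -/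
private lemma sumdig_sub_small {p : ℕ} (hp : 1 < p) {a c : ℕ} (hc : c ≤ a % p) :
    (Nat.digits p (a - c)).sum + c = (Nat.digits p a).sum := by
  have hp0 : 0 < p := by omega
  have hmod : a % p < p := Nat.mod_lt _ hp0
  have hd : p * (a / p) + a % p = a := Nat.div_add_mod a p
  have hsub : a - c = p * (a / p) + (a % p - c) := by omega
  have hx : a % p - c < p := by omega
  have h1 : (a - c) % p = a % p - c := by
    conv_lhs => rw [hsub]
    rw [Nat.mul_add_mod, Nat.mod_eq_of_lt hx]
  have h2 : (a - c) / p = a / p := by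
    conv_lhs => rw [hsub]
    rw [Nat.mul_add_div hp0, Nat.div_eq_of_lt hx, Nat.add_zero]
  rw [sumdig_cons hp (a - c), sumdig_cons hp a, h1, h2]
  omega

private lemma sumdig_small_add {p : ℕ} (hp : 1 < p) {r b : ℕ} (hr : r < p) (hb : b < p)
    (hrb : r + b < p) (e : ℕ) :
    (Nat.digits p (r + p ^ e * b)).sum = r + b := by
  rcases e with _ | e
  · rw [pow_zero, one_mul]
    exact sumdig_single hp hrb
  · have hre : r < p ^ (e + 1) := lt_of_lt_of_le hr (Nat.le_self_pow (by omega) p)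
    rw [sumdig_split hp (e + 1) r b hre, sumdig_single hp hr, sumdig_single hp hb]

private lemma modeq_sumdig {p q : ℕ} (hq : 0 < q) (hcong : p % q = 1 % q) (m : ℕ) :
    m % q = (Nat.digits p m).sum % q := by
  rcases Nat.lt_or_ge 1 q with h1 | h1
  · have h : p % q = 1 := by rwa [Nat.mod_eq_of_lt h1] at hcong
    exact Nat.modEq_digits_sum q p h m
  · obtain rfl : q = 1 := by omega
    omega

theorem stmt_5 (n q p : ℕ) (hq : 0 < q) (hn : q < n) (hp : p.Prime)
    (hcong : p % q = 1 % q) :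
    padicValNat p (Finset.gcd ((Finset.range n).filter (fun k => 0 < k ∧ q * k < n))
        (fun k => Nat.choose n (q * k))) =
      if (Nat.digits p n).sum ≤ q then 1 else 0 := by
  haveI : Fact p.Prime := ⟨hp⟩
  have hp1 : 1 < p := hp.one_lt
  have hp0 : 0 < p := by omega
  set S : Finset ℕ := (Finset.range n).filter (fun k => 0 < k ∧ q * k < n) with hS
  set f : ℕ → ℕ := fun k => Nat.choose n (q * k) with hf
  set s : ℕ := (Nat.digits p n).sum with hs
  clear_value S f s
  -- q < p
  have hqp : q < p := by
    rcases Nat.lt_or_ge q 2 with h1 | h1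
    · omega
    · have h2 : (1 : ℕ) % q = 1 := Nat.mod_eq_of_lt (by omega)
      rw [h2] at hcong
      by_contra h
      push_neg at h
      rcases eq_or_lt_of_le h with h3 | h3
      · rw [h3, Nat.mod_self] at hcong; omega
      · rw [Nat.mod_eq_of_lt h3] at hcong; omega
  -- generic membership facts
  have hmem : ∀ m : ℕ, 0 < m → m < n → q ∣ m → m / q ∈ S ∧ f (m / q) = Nat.choose n m := by
    intro m hm0 hmn hdvd
    have hmq : q * (m / q) = m := Nat.mul_div_cancel' hdvd
    have hkd : m / q ≤ m := Nat.div_le_self m q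
    have hk1 : 0 < m / q := Nat.div_pos (Nat.le_of_dvd hm0 hdvd) hq
    refine ⟨by rw [hS]; exact Finset.mem_filter.mpr ⟨Finset.mem_range.mpr (by omega), by omega, by omega⟩, ?_⟩
    simp only [hf, hmq]
  -- witness builder: digit sum q, located below n
  by_cases hsq : s ≤ q
  · -- case digit sum ≤ q : valuation 1
    rw [if_pos hsq]
    have hn0 : 0 < n := by omega
    have hs1 : 1 ≤ s := hs ▸ sumdig_pos hp1 n hn0
    -- n ≥ p
    have hnp : p ≤ n := by
      by_contra h
      push_neg at h
      have := sumdig_single hp1 h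
      omega
    set M : ℕ := n / p with hM
    have hM1 : 1 ≤ M := Nat.one_le_div_iff hp0 |>.mpr hnp
    set r : ℕ := n % p with hr
    have hrp : r < p := Nat.mod_lt _ hp0
    clear_value M r
    set e : ℕ := padicValNat p M with he
    have hpe : p ^ e ∣ M := pow_padicValNat_dvd
    clear_value e
    set N : ℕ := M / p ^ e with hN
    have hMN : p ^ e * N = M := Nat.mul_div_cancel' hpe
    clear_value N
    have hN1 : 1 ≤ N := by
      rcases Nat.eq_zero_or_pos N with h | h
      · rw [h, mul_zero] at hMN; omega
      · exact h
    have hNp : 1 ≤ N % p := by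
      rcases Nat.eq_zero_or_pos (N % p) with h | h
      · exfalso
        have hdvd : p ^ (e + 1) ∣ M := by
          rw [← hMN, pow_succ]
          exact Nat.mul_dvd_mul_left _ (Nat.dvd_of_mod_eq_zero h)
        have := (padicValNat_dvd_iff_le (p := p) (by omega : M ≠ 0)).mp hdvd
        omega
      · exact h
    -- digit sums of n
    have hsum_n : s = r + (Nat.digits p N).sum := by
      have h1 : (Nat.digits p M).sum = (Nat.digits p N).sum := by
        have := sumdig_split hp1 e 0 N (pow_pos hp0 _)
        simpa [hMN] using this
      rw [hs, sumdig_cons hp1 n, ← hr, ← hM, h1]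
    have hαN : 1 ≤ (Nat.digits p N).sum := sumdig_pos hp1 N hN1
    -- the witness m
    set b : ℕ := q + 1 - s with hb
    clear_value b
    have hb1 : 1 ≤ b := by omega
    have hbp : b < p := by omega
    have hrb : r + b ≤ q := by omega
    set m : ℕ := (r + p ^ e * b) + p ^ (e + 1) * (N - 1) with hm
    clear_value m
    -- m + (p-b) * p^e = n
    have hpMr : p * M + r = n := by
      have h := Nat.div_add_mod n p
      rw [← hM, ← hr] at h
      exact h
    have hn_eq : n = r + p ^ (e + 1) * N := by
      have h3 : p ^ (e + 1) * N = p * (p ^ e * N) := by ring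
      have h4 : p * (p ^ e * N) = p * M := by rw [hMN]
      omega
    have hmn : m + p ^ e * (p - b) = n := by
      obtain ⟨N', hN'⟩ : ∃ N', N = N' + 1 := ⟨N - 1, by omega⟩
      rw [hm, hn_eq, hN']
      simp only [Nat.add_sub_cancel]
      have hbp' : b + (p - b) = p := by omega
      calc (r + p ^ e * b) + p ^ (e + 1) * N' + p ^ e * (p - b)
          = r + p ^ e * (b + (p - b)) + p ^ (e + 1) * N' := by ring
        _ = r + p ^ e * p + p ^ (e + 1) * N' := by rw [hbp']
        _ = r + p ^ (e + 1) * (N' + 1) := by ring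
    have hpe1 : 0 < p ^ e := pow_pos hp0 _
    have hpb1 : 1 ≤ p - b := by omega
    have hmlt : m < n := by
      have := Nat.mul_pos hpe1 (show 0 < p - b by omega)
      omega
    -- digit sum of m
    have hinner : r + p ^ e * b < p ^ (e + 1) := by
      have h1 : r ≤ (q - b) * p ^ e :=
        le_trans (by omega : r ≤ q - b) (Nat.le_mul_of_pos_right _ hpe1)
      have h2 : (q - b) * p ^ e + p ^ e * b = q * p ^ e := by
        have h : (q - b) + b = q := by omega
        calc (q - b) * p ^ e + p ^ e * b = ((q - b) + b) * p ^ e := by ring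
          _ = q * p ^ e := by rw [h]
      have h3 : q * p ^ e < p * p ^ e := (Nat.mul_lt_mul_right hpe1).mpr hqp
      have h4 : p * p ^ e = p ^ (e + 1) := by ring
      omega
    have hsum_m : (Nat.digits p m).sum = q := by
      rw [hm, sumdig_split hp1 (e + 1) _ _ hinner,
        sumdig_small_add hp1 hrp hbp (by omega) e]
      have h2 : (Nat.digits p (N - 1)).sum + 1 = (Nat.digits p N).sum :=
        sumdig_sub_small hp1 hNp
      omega
    have hm0 : 0 < m := by
      rcases Nat.eq_zero_or_pos m with h | h
      · rw [h] at hsum_m; simp at hsum_m; omega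
      · exact h
    -- digit sum of n - m
    have hsub : n - m = p ^ e * (p - b) := by omega
    have hsum_nm : (Nat.digits p (n - m)).sum = p - b := by
      rw [hsub]
      have := sumdig_split hp1 e 0 (p - b) hpe1
      simp only [zero_add] at this
      rw [this, sumdig_single hp1 (by omega : p - b < p)]
      simp
    -- q ∣ m
    have hqm : q ∣ m := by
      have hthis := modeq_sumdig hq hcong m
      rw [hsum_m, Nat.mod_self] at hthis
      exact Nat.dvd_of_mod_eq_zero hthis
    obtain ⟨hk0S, hk0f⟩ := hmem m hm0 hmlt hqm
    -- valuation of the witness binomial is 1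
    have hleg := sub_one_mul_padicValNat_choose_eq_sub_sum_digits
      (p := p) (le_of_lt hmlt)
    rw [hsum_m, hsum_nm, ← hs] at hleg
    have hval1 : padicValNat p (Nat.choose n m) = 1 := by
      have : (p - 1) * padicValNat p (Nat.choose n m) = p - 1 := by omega
      have hne : p - 1 ≠ 0 := by omega
      have := Nat.eq_of_mul_eq_mul_left (by omega : 0 < p - 1)
        (by rw [this, mul_one] : (p - 1) * padicValNat p (Nat.choose n m) = (p - 1) * 1)
      exact this
    -- every element of S is divisible by p
    have hdvd_all : ∀ k ∈ S, p ∣ f k := by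
      intro k hk
      rw [hS] at hk
      obtain ⟨hkR, hk0, hkn⟩ := Finset.mem_filter.mp hk
      set m' : ℕ := q * k with hm'
      clear_value m'
      have hm'0 : 0 < m' := by rw [hm']; exact Nat.mul_pos hq hk0
      have hm'n : m' < n := hkn
      have hleg' := sub_one_mul_padicValNat_choose_eq_sub_sum_digits
        (p := p) (le_of_lt hm'n)
      have hαm' : q ≤ (Nat.digits p m').sum := by
        have hcongm := modeq_sumdig hq hcong m'
        have hqm' : m' % q = 0 := by simp [hm', Nat.mul_mod_right]
        have hpos := sumdig_pos hp1 m' hm'0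
        have : q ∣ (Nat.digits p m').sum := Nat.dvd_of_mod_eq_zero (by omega)
        exact Nat.le_of_dvd hpos this
      have hαnm' : 1 ≤ (Nat.digits p (n - m')).sum := sumdig_pos hp1 _ (by omega)
      have hvpos : 1 ≤ padicValNat p (Nat.choose n m') := by
        by_contra h
        push_neg at h
        have hv0 : padicValNat p (Nat.choose n m') = 0 := by omega
        rw [hv0, mul_zero, ← hs] at hleg'
        omega
      have hcne : Nat.choose n m' ≠ 0 := (Nat.choose_pos (le_of_lt hm'n)).ne'
      have := (padicValNat_dvd_iff_le (p := p) hcne).mpr hvpos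
      simpa [hf, hm'] using this
    -- gcd facts
    have hgdvd : Finset.gcd S f ∣ f (m / q) := Finset.gcd_dvd hk0S
    have hg0 : Finset.gcd S f ≠ 0 := by
      intro h
      have := Finset.gcd_eq_zero_iff.mp h (m / q) hk0S
      rw [hk0f] at this
      exact (Nat.choose_pos (le_of_lt hmlt)).ne' this
    have hpg : p ∣ Finset.gcd S f := Finset.dvd_gcd hdvd_all
    have h1le : 1 ≤ padicValNat p (Finset.gcd S f) :=
      one_le_padicValNat_of_dvd hg0 hpg
    have h2gt : padicValNat p (Finset.gcd S f) < 2 := by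
      by_contra h
      push_neg at h
      have hdvd2 : p ^ 2 ∣ Finset.gcd S f :=
        dvd_trans (pow_dvd_pow p h) pow_padicValNat_dvd
      have : p ^ 2 ∣ Nat.choose n m := by
        rw [← hk0f]; exact dvd_trans hdvd2 hgdvd
      have := (padicValNat_dvd_iff_le (p := p)
        (Nat.choose_pos (le_of_lt hmlt)).ne').mp this
      omega
    omega
  · -- case digit sum > q : valuation 0
    rw [if_neg hsq]
    push_neg at hsq
    -- find the cut position j
    set t : ℕ → ℕ := fun j => (Nat.digits p (n % p ^ j)).sum with ht
    have hex : ∃ j, q < t (j + 1) := by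
      refine ⟨(Nat.digits p n).length, ?_⟩
      have h1 : n < p ^ ((Nat.digits p n).length + 1) :=
        lt_of_lt_of_le (Nat.lt_base_pow_length_digits hp1)
          (Nat.pow_le_pow_right hp0 (by omega))
      simp only [ht, Nat.mod_eq_of_lt h1]
      omega
    set j : ℕ := Nat.find hex with hj
    have hjq : q < t (j + 1) := Nat.find_spec hex
    have hjq' : t j ≤ q := by
      rcases Nat.eq_zero_or_pos j with h | h
      · simp only [ht, h, pow_zero, Nat.mod_one, Nat.digits_zero, List.sum_nil]
        omega
      · have := Nat.find_min hex (m := j - 1) (by omega)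
        have hj1 : j - 1 + 1 = j := by omega
        rw [hj1] at this
        omega
    have hpj : 0 < p ^ j := pow_pos hp0 _
    have hmodlt : n % p ^ j < p ^ j := Nat.mod_lt _ hpj
    set d : ℕ := n / p ^ j % p with hd
    have hdp : d < p := Nat.mod_lt _ hp0
    -- t (j+1) = t j + d
    have hstep : t (j + 1) = t j + d := by
      have h1 : n % p ^ (j + 1) = n % p ^ j + p ^ j * d := by
        have h0 : n % (p ^ j * p) = n % p ^ j + p ^ j * (n / p ^ j % p) := Nat.mod_mul
        rw [pow_succ, h0, ← hd]
      simp only [ht, h1]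
      rw [sumdig_split hp1 j _ _ hmodlt, sumdig_single hp1 hdp]
    set c : ℕ := q - t j with hc
    clear_value c
    have hcd : c < d := by omega
    set m : ℕ := n % p ^ j + p ^ j * c with hm
    clear_value m
    have hsum_m : (Nat.digits p m).sum = q := by
      rw [hm, sumdig_split hp1 j _ _ hmodlt, sumdig_single hp1 (by omega : c < p)]
      have hxj : (Nat.digits p (n % p ^ j)).sum = t j := by rw [ht]
      omega
    have hm0 : 0 < m := by
      rcases Nat.eq_zero_or_pos m with h | h
      · rw [h] at hsum_m; simp at hsum_m; omega
      · exact h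
    set A : ℕ := n / p ^ j with hA
    clear_value A
    have hdA : d ≤ A := by rw [hd, hA]; exact Nat.mod_le _ _
    have hnmA : n = n % p ^ j + p ^ j * A := by
      rw [hA]; have := Nat.mod_add_div n (p ^ j); omega
    have hmlt : m < n := by
      have h1 : p ^ j * c < p ^ j * A :=
        Nat.mul_lt_mul_of_pos_left (show c < A by omega) hpj
      omega
    -- n - m
    have hcA : c ≤ A := by omega
    have hsub : n - m = p ^ j * (A - c) := by
      have : p ^ j * A = p ^ j * c + p ^ j * (A - c) := by
        rw [← Nat.mul_add, Nat.add_sub_cancel' hcA]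
      omega
    have hAp : A % p = d := by rw [hd, hA]
    have hcAp : c ≤ A % p := by omega
    have hsum_nm : (Nat.digits p (n - m)).sum + c = (Nat.digits p A).sum := by
      rw [hsub]
      have h1 := sumdig_split hp1 j 0 (A - c) hpj
      simp only [zero_add] at h1
      rw [h1]
      have : (Nat.digits p 0).sum = 0 := by simp
      rw [this, zero_add]
      exact sumdig_sub_small hp1 hcAp
    have hsum_n : s = t j + (Nat.digits p A).sum := by
      rw [hs]
      conv_lhs => rw [hnmA]
      rw [sumdig_split hp1 j _ _ hmodlt]
    -- q ∣ m
    have hqm : q ∣ m := by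
      have hthis := modeq_sumdig hq hcong m
      rw [hsum_m, Nat.mod_self] at hthis
      exact Nat.dvd_of_mod_eq_zero hthis
    obtain ⟨hk0S, hk0f⟩ := hmem m hm0 hmlt hqm
    -- valuation of witness binomial is 0
    have hleg := sub_one_mul_padicValNat_choose_eq_sub_sum_digits
      (p := p) (le_of_lt hmlt)
    rw [hsum_m, ← hs] at hleg
    have hval0 : padicValNat p (Nat.choose n m) = 0 := by
      have h0 : (p - 1) * padicValNat p (Nat.choose n m) = 0 := by
        rw [hleg]
        simp only [ht] at hjq'
        omega
      rcases Nat.mul_eq_zero.mp h0 with h | h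
      · omega
      · exact h
    have hnd : ¬ p ∣ Nat.choose n m := by
      intro h
      have := one_le_padicValNat_of_dvd (Nat.choose_pos (le_of_lt hmlt)).ne' h
      omega
    have : ¬ p ∣ Finset.gcd S f := by
      intro h
      exact hnd (dvd_trans h (hk0f ▸ Finset.gcd_dvd hk0S))
    exact padicValNat.eq_zero_of_not_dvd this
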